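/- Completeness of the value of control criterion, non-decision-path case: if a CID has a directed path ρ from X to a utility node U not passing through the decision D, then the SCIM with all domains {0,1}, X ≡ 0, each node on ρ copying its predecessor, and all other variables constantly 0, satisfies: the maximum expected utility over policies is 0, but under the soft intervention setting X to 1 it is 1; hence X has positive value of control. -/

import Mathlib

attribute [local instance] Classical.propDecidable

noncomputable section

/-- Acyclicity of a directed graph. -/
def Acyclic {V : Type} (E : V → V → Prop) : Prop := ∀ v, ¬ Relation.TransGen E v v

/-- A walk in the digraph: a nonempty list of vertices where consecutive
vertices are joined by an edge in some direction. -/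
def IsWalk {V : Type} (E : V → V → Prop) (p : List V) : Prop :=
  p ≠ [] ∧ p.Chain' (fun a b => E a b ∨ E b a)

/-- A consecutive triple `a, b, c` blocks a path w.r.t. `S` if `b` is a collider
with no descendant (including itself) in `S`, or a non-collider in `S`. -/
def BlockedTriple {V : Type} (E : V → V → Prop) (S : Set V) (a b c : V) : Prop :=
  (E a b ∧ E c b ∧ ∀ w, Relation.ReflTransGen E b w → w ∉ S) ∨
  (¬ (E a b ∧ E c b) ∧ b ∈ S)

/-- A path is d-separated (blocked) by `S`. -/
def BlocksPath {V : Type} (E : V → V → Prop) (S : Set V) (p : List V) : Prop :=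
  (∃ x, p.head? = some x ∧ x ∈ S) ∨ (∃ x, p.getLast? = some x ∧ x ∈ S) ∨
  (∃ l a b c r, p = l ++ a :: b :: c :: r ∧ BlockedTriple E S a b c)

/-- `A` is d-separated from `B` given `S`. -/
def DSep {V : Type} (E : V → V → Prop) (A B S : Set V) : Prop :=
  ∀ p : List V, IsWalk E p → (∃ a ∈ A, p.head? = some a) →
    (∃ b ∈ B, p.getLast? = some b) → BlocksPath E S p

/-- An observation `X ∈ Pa_D` is requisite in the graph `E` with decision `D` and
utility nodes `U` if it is d-connected to the downstream utilities `U ∩ Desc(D)`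
given the other observations and the decision, `(Pa_D ∪ {D}) \ {X}`. -/
def RequisiteG {V : Type} (E : V → V → Prop) (D : V) (U : Set V) (X : V) : Prop :=
  E X D ∧ ¬ DSep E {X} {u | u ∈ U ∧ Relation.ReflTransGen E D u}
      {v | (E v D ∧ v ≠ X) ∨ v = D}

/-- The edge relation of the minimal reduction: all information links from
nonrequisite observations are removed. -/
def ReducedEdge {V : Type} (E : V → V → Prop) (D : V) (U : Set V) : V → V → Prop :=
  fun a b => E a b ∧ (b = D → RequisiteG E D U a)

variable {V : Type} [Fintype V] [DecidableEq V]

/-- A single-decision structural causal influence model (SCIM): a causal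
influence diagram (DAG with a decision node `D` and childless utility nodes
`Util` whose values are interpreted in `ℝ` via `utilReal`), finite nonempty
domains, structural functions for all non-decision nodes depending only on
parents, and mutually independent finitely-supported exogenous variables. -/
structure SCIM (V : Type) [Fintype V] [DecidableEq V] where
  Edge : V → V → Prop
  acyclic : Acyclic Edge
  D : V
  Util : Finset V
  utilNotD : D ∉ Util
  utilNoChild : ∀ u ∈ Util, ∀ v, ¬ Edge u v
  Dom : V → Type
  domFin : ∀ v, Fintype (Dom v)
  domNE : ∀ v, Nonempty (Dom v)
  utilReal : (u : V) → Dom u → ℝ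
  ExoDom : V → Type
  exoFin : ∀ v, Fintype (ExoDom v)
  exoNE : ∀ v, Nonempty (ExoDom v)
  f : (v : V) → ((p : V) → Dom p) → ExoDom v → Dom v
  localDep : ∀ v a a' e, (∀ p, Edge p v → a p = a' p) → f v a e = f v a' e
  P : (v : V) → ExoDom v → ℝ
  Pnonneg : ∀ v e, 0 ≤ P v e
  Psum : ∀ v, ∑ e ∈ (exoFin v).elems, P v e = 1

namespace SCIM

variable (M : SCIM V)

/-- Joint (product) probability of an exogenous setting. -/
def Pjoint (ε : ∀ v, M.ExoDom v) : ℝ := ∏ v, M.P v (ε v)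

/-- All exogenous settings. -/
def exoElems : Finset (∀ v, M.ExoDom v) :=
  letI := M.exoFin; Finset.univ

/-- A default assignment of values. -/
def dflt : ∀ v, M.Dom v := fun v => (M.domNE v).some

/-- `a` solves the system of structural equations `g` at exogenous setting `ε`. -/
def Solves (g : (v : V) → ((p : V) → M.Dom p) → M.ExoDom v → M.Dom v)
    (ε : ∀ v, M.ExoDom v) (a : ∀ v, M.Dom v) : Prop :=
  ∀ v, a v = g v a (ε v)

/-- The (unique, by acyclicity) solution of the structural equations `g`
at `ε`: the values of all endogenous variables obtained by recursive
application of the structural functions. -/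
def sol (g : (v : V) → ((p : V) → M.Dom p) → M.ExoDom v → M.Dom v)
    (ε : ∀ v, M.ExoDom v) : ∀ v, M.Dom v :=
  if h : ∃ a, M.Solves g ε a then h.choose else M.dflt

/-- Replace the structural function at node `X` by `gX` (a soft intervention). -/
def replaceAt (g : (v : V) → ((p : V) → M.Dom p) → M.ExoDom v → M.Dom v) (X : V)
    (gX : ((p : V) → M.Dom p) → M.ExoDom X → M.Dom X) :
    (v : V) → ((p : V) → M.Dom p) → M.ExoDom v → M.Dom v :=
  fun v => if h : v = X then (by subst h; exact gX) else g v

/-- Hard intervention do(`X` = `x`): constant functions on `X`. -/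
def doSet (g : (v : V) → ((p : V) → M.Dom p) → M.ExoDom v → M.Dom v)
    (X : Set V) (x : ∀ v, M.Dom v) :
    (v : V) → ((p : V) → M.Dom p) → M.ExoDom v → M.Dom v :=
  fun v => if v ∈ X then fun _ _ => x v else g v

/-- A policy: a structural function for `D` that depends only on the
observations `Pa_D` (and the exogenous variable of `D`). -/
def IsPolicy (π : ((p : V) → M.Dom p) → M.ExoDom M.D → M.Dom M.D) : Prop :=
  ∀ a a' e, (∀ p, M.Edge p M.D → a p = a' p) → π a e = π a' e

/-- The policy-completed system of structural functions. -/
def gpol (π : ((p : V) → M.Dom p) → M.ExoDom M.D → M.Dom M.D) :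
    (v : V) → ((p : V) → M.Dom p) → M.ExoDom v → M.Dom v :=
  M.replaceAt M.f M.D π

/-- Total utility of an assignment: the sum of the utility-node values. -/
def TotalU (a : ∀ v, M.Dom v) : ℝ := ∑ u ∈ M.Util, M.utilReal u (a u)

/-- Expected total utility of a system of structural equations `g`. -/
def EUg (g : (v : V) → ((p : V) → M.Dom p) → M.ExoDom v → M.Dom v) : ℝ :=
  ∑ ε ∈ M.exoElems, M.Pjoint ε * M.TotalU (M.sol g ε)

/-- Expected total utility of a policy. -/
def EU (π : ((p : V) → M.Dom p) → M.ExoDom M.D → M.Dom M.D) : ℝ :=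
  M.EUg (M.gpol π)

/-- An optimal policy maximizes expected total utility. -/
def IsOptimal (π : ((p : V) → M.Dom p) → M.ExoDom M.D → M.Dom M.D) : Prop :=
  M.IsPolicy π ∧ ∀ π', M.IsPolicy π' → M.EU π' ≤ M.EU π

/-- Probability of an event over exogenous settings. -/
def PrEv (Ev : (∀ v, M.ExoDom v) → Prop) : ℝ :=
  ∑ ε ∈ M.exoElems, if Ev ε then M.Pjoint ε else 0

/-- Conditional expectation of `h` given the event `Ev`. -/
def condExp (h : (∀ v, M.ExoDom v) → ℝ) (Ev : (∀ v, M.ExoDom v) → Prop) : ℝ :=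
  (∑ ε ∈ M.exoElems, if Ev ε then M.Pjoint ε * h ε else 0) / M.PrEv Ev

/-- Conditional probability of `h` given `Ev`. -/
def condProb (h Ev : (∀ v, M.ExoDom v) → Prop) : ℝ :=
  M.PrEv (fun ε => h ε ∧ Ev ε) / M.PrEv Ev

/-- The event that the decision context (the observations `Pa_D`) takes the
values `pa`, under policy `π`. -/
def CtxEvent (π : ((p : V) → M.Dom p) → M.ExoDom M.D → M.Dom M.D)
    (pa : ∀ v, M.Dom v) (ε : ∀ v, M.ExoDom v) : Prop :=
  ∀ p, M.Edge p M.D → M.sol (M.gpol π) ε p = pa p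

/-- The potential response under the hard intervention do(`X` = `x`),
in the policy-completed model: an assignment to all variables. -/
def response (π : ((p : V) → M.Dom p) → M.ExoDom M.D → M.Dom M.D)
    (X : V) (x : M.Dom X) (ε : ∀ v, M.ExoDom v) : ∀ v, M.Dom v :=
  M.sol (M.doSet (M.gpol π) {X} (Function.update M.dflt X x)) ε

/-- The nested-counterfactual assignment realizing `U_{X_d}`: intervene on `X`
with the value `X_d(ε)` it would take under do(`D` = `d`). -/
def nestedSol (π : ((p : V) → M.Dom p) → M.ExoDom M.D → M.Dom M.D)
    (X : V) (d : M.Dom M.D) (ε : ∀ v, M.ExoDom v) : ∀ v, M.Dom v :=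
  M.response π X (M.response π M.D d ε X) ε

/-- Instrumental control incentive on `X`: in some decision context `pa`
(of positive probability), every optimal policy has
`E[U_{X_d} | pa] ≠ E[U | pa]` for some `d`. -/
def HasICI (X : V) : Prop :=
  ∃ pa : ∀ v, M.Dom v, ∀ π, M.IsOptimal π →
    0 < M.PrEv (M.CtxEvent π pa) ∧
    ∃ d : M.Dom M.D,
      M.condExp (fun ε => M.TotalU (M.nestedSol π X d ε)) (M.CtxEvent π pa) ≠
      M.condExp (fun ε => M.TotalU (M.sol (M.gpol π) ε)) (M.CtxEvent π pa)

/-- A policy that does not use the information link `X → D`. -/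
def IsPolicyWithout (X : V)
    (π : ((p : V) → M.Dom p) → M.ExoDom M.D → M.Dom M.D) : Prop :=
  M.IsPolicy π ∧ ∀ a a' e, (∀ p, M.Edge p M.D → p ≠ X → a p = a' p) → π a e = π a' e

/-- Counterfactual fairness of policy `π` w.r.t. sensitive attribute `A`:
`Pr(D_{a'} = d | pa_D, a) = Pr(D = d | pa_D, a)` for all `d`, contexts `pa_D`,
and attribute values `a, a'` with positive probability of the conditioning event. -/
def CFair (π : ((p : V) → M.Dom p) → M.ExoDom M.D → M.Dom M.D) (A : V) : Prop :=
  ∀ (d : M.Dom M.D) (pa : ∀ v, M.Dom v) (a a' : M.Dom A),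
    0 < M.PrEv (fun ε => M.CtxEvent π pa ε ∧ M.sol (M.gpol π) ε A = a) →
    M.condProb (fun ε => M.response π A a' ε M.D = d)
        (fun ε => M.CtxEvent π pa ε ∧ M.sol (M.gpol π) ε A = a) =
    M.condProb (fun ε => M.sol (M.gpol π) ε M.D = d)
        (fun ε => M.CtxEvent π pa ε ∧ M.sol (M.gpol π) ε A = a)

end SCIM

namespace VoCAux

/-- The predecessor of `v` along the list `l` (first occurrence as a target). -/
def predIn {V : Type} [DecidableEq V] : List V → V → Option V
  | a :: b :: t, v => if b = v then some a else predIn (b :: t) v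
  | _, _ => none

lemma predIn_eq_none {V : Type} [DecidableEq V] :
    ∀ {l : List V} {v : V}, v ∉ l.tail → predIn l v = none
  | [], _, _ => rfl
  | [_], _, _ => rfl
  | a :: b :: t, v, h => by
    simp only [List.tail_cons, List.mem_cons, not_or] at h
    simp only [predIn, if_neg (Ne.symm h.1)]
    exact predIn_eq_none (l := b :: t) (by simpa using h.2)

lemma predIn_append {V : Type} [DecidableEq V] :
    ∀ {l₁ : List V} {a b : V} {l₂ : List V}, (l₁ ++ a :: b :: l₂).Nodup →
      predIn (l₁ ++ a :: b :: l₂) b = some a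
  | [], a, b, l₂, h => by
    have hab : a ≠ b := by
      simp only [List.nil_append, List.nodup_cons, List.mem_cons] at h
      exact fun hh => h.1 (Or.inl hh)
    simp [predIn, hab]
  | [c], a, b, l₂, h => by
    have h1 : (a :: b :: l₂).Nodup := by
      have h0 : (c :: (a :: b :: l₂)).Nodup := by simpa using h
      exact (List.nodup_cons.mp h0).2
    have hab : a ≠ b := fun hh =>
      (List.nodup_cons.mp h1).1 (by rw [hh]; exact List.mem_cons_self)
    show predIn (c :: a :: b :: l₂) b = some a
    have hstep : predIn (c :: a :: b :: l₂) b
        = if a = b then some c else predIn (a :: b :: l₂) b := rfl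
    rw [hstep, if_neg hab]
    have hstep2 : predIn (a :: b :: l₂) b
        = if b = b then some a else predIn (b :: l₂) b := rfl
    rw [hstep2, if_pos rfl]
  | c :: e :: l₁', a, b, l₂, h => by
    have h0 : (c :: (e :: (l₁' ++ a :: b :: l₂))).Nodup := by simpa using h
    have h' : (e :: (l₁' ++ a :: b :: l₂)).Nodup := (List.nodup_cons.mp h0).2
    have heb : e ≠ b := by
      intro hh
      exact (List.nodup_cons.mp h').1 (by rw [hh]; simp)
    show predIn (c :: e :: (l₁' ++ a :: b :: l₂)) b = some a
    have hstep : predIn (c :: e :: (l₁' ++ a :: b :: l₂)) b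
        = if e = b then some c else predIn (e :: (l₁' ++ a :: b :: l₂)) b := rfl
    rw [hstep, if_neg heb]
    exact predIn_append (l₁ := e :: l₁') h'

lemma predIn_edge {V : Type} [DecidableEq V] {R : V → V → Prop} :
    ∀ {l : List V} {v p : V}, l.Chain' R → predIn l v = some p → R p v
  | [], _, _, _, he => by simp [predIn] at he
  | [_], _, _, _, he => by simp [predIn] at he
  | a :: b :: t, v, p, hc, he => by
    rcases List.isChain_cons_cons.mp hc with ⟨hab, hc'⟩
    by_cases hbv : b = v
    · subst hbv
      have h2 : (if b = b then some a else predIn (b :: t) b) = some p := he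
      rw [if_pos rfl] at h2
      injection h2 with h3
      exact h3 ▸ hab
    · have h2 : (if b = v then some a else predIn (b :: t) v) = some p := he
      rw [if_neg hbv] at h2
      exact predIn_edge hc' h2

lemma chain_forall {V : Type} {R : V → V → Prop} {P : V → Prop} (h : ∀ a b, R a b → P b) :
    ∀ {a : V} {l : List V}, List.Chain R a l → ∀ v ∈ l, P v := by
  intro a l hc
  induction l generalizing a with
  | nil => intro v hv; simp at hv
  | cons b t ih =>
    rcases List.isChain_cons_cons.mp hc with ⟨hr, hc2⟩
    intro v hv
    rcases List.mem_cons.mp hv with rfl | hv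
    · exact h _ _ hr
    · exact ih hc2 v hv

lemma chain_transGen {V : Type} {R : V → V → Prop} :
    ∀ {a : V} {l : List V}, List.Chain R a l → ∀ b ∈ l, Relation.TransGen R a b := by
  intro a l hc
  induction l generalizing a with
  | nil => intro b hb; simp at hb
  | cons c t ih =>
    rcases List.isChain_cons_cons.mp hc with ⟨hr, hc2⟩
    intro b hb
    rcases List.mem_cons.mp hb with rfl | hb
    · exact Relation.TransGen.single hr
    · exact Relation.TransGen.head hr (ih hc2 b hb)

lemma chain_nodup {V : Type} {R : V → V → Prop} (hR : ∀ v, ¬ Relation.TransGen R v v) :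
    ∀ {a : V} {l : List V}, List.Chain R a l → (a :: l).Nodup := by
  intro a l hc
  induction l generalizing a with
  | nil => simp
  | cons b l ih =>
    rcases List.isChain_cons_cons.mp hc with ⟨hr, hc⟩
    refine List.nodup_cons.mpr ⟨?_, ih hc⟩
    intro ha
    rcases List.mem_cons.mp ha with rfl | ha
    · exact hR a (Relation.TransGen.single hr)
    · exact hR a (Relation.TransGen.head hr (chain_transGen hc a ha))

lemma acyclic_wf {V : Type} [Finite V] {E : V → V → Prop} (h : Acyclic E) :
    WellFounded E := by
  haveI : IsTrans V (Relation.TransGen E) := ⟨fun _ _ _ => Relation.TransGen.trans⟩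
  haveI : IsIrrefl V (Relation.TransGen E) := ⟨h⟩
  exact Subrelation.wf (fun hab => Relation.TransGen.single hab)
    (Finite.wellFounded_of_trans_of_irrefl _)

variable {V : Type} [Fintype V] [DecidableEq V]

/-- If the system `g` depends only on parents, the chosen `sol` really solves it. -/
lemma sol_solves (M : SCIM V) (g : (v : V) → ((p : V) → M.Dom p) → M.ExoDom v → M.Dom v)
    (hg : ∀ v a a' e, (∀ p, M.Edge p v → a p = a' p) → g v a e = g v a' e)
    (ε : ∀ v, M.ExoDom v) : M.Solves g ε (M.sol g ε) := by
  have hex : ∃ a, M.Solves g ε a := by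
    refine ⟨(acyclic_wf M.acyclic).fix
      (fun v IH => g v (fun p => if h : M.Edge p v then IH p h else M.dflt p) (ε v)), ?_⟩
    intro v
    rw [WellFounded.fix_eq]
    exact hg v _ _ _ (fun p hp => by rw [dif_pos hp])
  rw [SCIM.sol, dif_pos hex]
  exact hex.choose_spec

lemma replaceAt_self (M : SCIM V) (g : (v : V) → ((p : V) → M.Dom p) → M.ExoDom v → M.Dom v)
    (X : V) (gX : ((p : V) → M.Dom p) → M.ExoDom X → M.Dom X) :
    M.replaceAt g X gX X = gX := by
  show (if h : X = X then _ else g X) = gX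
  rw [dif_pos rfl]

lemma replaceAt_ne (M : SCIM V) (g : (v : V) → ((p : V) → M.Dom p) → M.ExoDom v → M.Dom v)
    (X : V) (gX : ((p : V) → M.Dom p) → M.ExoDom X → M.Dom X) {v : V} (h : v ≠ X) :
    M.replaceAt g X gX v = g v := by
  show (if hh : v = X then _ else g v) = g v
  rw [dif_neg h]

/-- The SCIM built from a directed path: Boolean domains, each node on the
path copies its predecessor, everything else is constantly `false`. -/
@[reducible]
def pathModel (E : V → V → Prop) (hac : Acyclic E) (D : V) (Util : Finset V)
    (hD : D ∉ Util) (hchild : ∀ u ∈ Util, ∀ v, ¬ E u v) (u : V) (L : List V)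
    (hL : ∀ v p, predIn L v = some p → E p v) : SCIM V where
  Edge := E
  acyclic := hac
  D := D
  Util := Util
  utilNotD := hD
  utilNoChild := hchild
  Dom := fun _ => Bool
  domFin := fun _ => inferInstance
  domNE := fun _ => inferInstance
  utilReal := fun w b => if w = u then (if b then 1 else 0) else 0
  ExoDom := fun _ => Unit
  exoFin := fun _ => inferInstance
  exoNE := fun _ => inferInstance
  f := fun v a _ => match predIn L v with | some p => a p | none => false
  localDep := by
    intro v a a' e hpa
    cases h : predIn L v with
    | none => simp [h]
    | some p => simp only [h]; exact hpa p (hL v p h)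
  P := fun _ _ => 1
  Pnonneg := fun _ _ => zero_le_one
  Psum := fun v => by
    rw [Finset.sum_const]
    show Fintype.card Unit • (1 : ℝ) = 1
    simp

end VoCAux

/-- value of control completeness, non-decision-path case: if
the CID has a directed path from `X` to a utility node `u` avoiding the decision
`D`, then there is a compatible SCIM with Boolean domains in which every policy
attains expected utility `0`, while some soft intervention `gX` at `X` yields
expected utility `1` for every policy; hence `X` has positive value of control. -/
theorem voc_completeness_nondecision_path {V : Type} [Fintype V] [DecidableEq V]
    (E : V → V → Prop) (hac : Acyclic E) (D : V) (Util : Finset V)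
    (hD : D ∉ Util) (hchild : ∀ u ∈ Util, ∀ v, ¬ E u v)
    (X : V) (hXD : X ≠ D) (u : V) (hu : u ∈ Util)
    (hpath : Relation.ReflTransGen (fun a b => E a b ∧ a ≠ D ∧ b ≠ D) X u) :
    ∃ M : SCIM V, M.Edge = E ∧ M.D = D ∧ M.Util = Util ∧
      (∀ v, M.Dom v = Bool) ∧
      (∀ π, M.IsPolicy π → M.EU π = 0) ∧
      ∃ gX : ((p : V) → M.Dom p) → M.ExoDom X → M.Dom X,
        (∀ a a' e, (∀ p, M.Edge p X → a p = a' p) → gX a e = gX a' e) ∧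
        (∀ π, M.IsPolicy π → M.EUg (M.replaceAt (M.gpol π) X gX) = 1) := by
  classical
  open VoCAux in
  obtain ⟨l, hchain, hlast⟩ := List.exists_isChain_cons_of_relationReflTransGen hpath
  set R : V → V → Prop := fun a b => E a b ∧ a ≠ D ∧ b ≠ D with hR
  set L : List V := X :: l with hLdef
  have hnodupL : L.Nodup := by
    refine chain_nodup (R := R) ?_ hchain
    intro v hv
    exact hac v (Relation.TransGen.mono (fun a b h => h.1) v v hv)
  have hXl : X ∉ l := (List.nodup_cons.mp hnodupL).1
  have hND : ∀ v ∈ L, v ≠ D := by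
    intro v hv
    rcases List.mem_cons.mp hv with rfl | hv
    · exact hXD
    · exact chain_forall (P := fun b => b ≠ D) (fun a b h => h.2.2) hchain v hv
  have hchainE : L.Chain' E := by
    have hc : L.Chain' R := hchain
    exact List.IsChain.imp (fun a b h => h.1) hc
  have hLedge : ∀ v p, predIn L v = some p → E p v := fun v p h => predIn_edge hchainE h
  have huL : u ∈ L := by
    rw [← hlast]; exact List.getLast_mem _
  set M : SCIM V := pathModel E hac D Util hD hchild u L hLedge with hM
  -- the key propagation lemma: all values along the path copy the value at `X`
  have main : ∀ (g : (v : V) → ((p : V) → M.Dom p) → M.ExoDom v → M.Dom v),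
      (∀ v a a' e, (∀ p, M.Edge p v → a p = a' p) → g v a e = g v a' e) →
      (∀ v, v ∈ l → g v = M.f v) →
      ∀ ε : ∀ v, M.ExoDom v, ∀ v ∈ L, M.sol g ε v = M.sol g ε X := by
    intro g hg hgf ε
    have hsol : M.Solves g ε (M.sol g ε) := sol_solves M g hg ε
    set a := M.sol g ε with ha
    have step : ∀ p v (l₁ l₂ : List V), L = l₁ ++ p :: v :: l₂ → a v = a p := by
      intro p v l₁ l₂ hLeq
      have hvl : v ∈ l := by
        cases l₁ with
        | nil =>
          have hx : X :: l = p :: v :: l₂ := by rw [← hLdef, hLeq]; rfl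
          injection hx with h1 h2
          rw [h2]; exact List.mem_cons_self
        | cons c l₁' =>
          have hx : X :: l = c :: (l₁' ++ p :: v :: l₂) := by rw [← hLdef, hLeq]; rfl
          injection hx with h1 h2
          rw [h2]; simp
      have hpred : predIn L v = some p := by
        rw [hLeq]; exact predIn_append (by rw [← hLeq]; exact hnodupL)
      calc a v = g v a (ε v) := hsol v
        _ = M.f v a (ε v) := by rw [hgf v hvl]
        _ = a p := by
            show (match predIn L v with | some p => a p | none => false) = a p
            rw [hpred]
    have prop : ∀ (l₂ l₁ : List V) (p : V), L = l₁ ++ p :: l₂ →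
        ∀ v ∈ p :: l₂, a v = a p := by
      intro l₂
      induction l₂ with
      | nil =>
        intro l₁ p hLeq v hv
        rcases List.mem_cons.mp hv with rfl | hv
        · rfl
        · simp at hv
      | cons w t ih =>
        intro l₁ p hLeq v hv
        rcases List.mem_cons.mp hv with rfl | hv'
        · rfl
        · have hw : a w = a p := step p w l₁ t hLeq
          have h2 : L = (l₁ ++ [p]) ++ w :: t := by rw [hLeq]; simp
          exact (ih (l₁ ++ [p]) w h2 v hv').trans hw
    intro v hv
    exact prop l [] X (by simp [hLdef]) v (by rw [← hLdef]; exact hv)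
  -- local-dependence of the policy-completed system
  have hgL : ∀ π, M.IsPolicy π → ∀ v a a' e,
      (∀ p, M.Edge p v → a p = a' p) → M.gpol π v a e = M.gpol π v a' e := by
    intro π hπ v a a' e hpa
    by_cases hvD : v = D
    · subst hvD
      show M.replaceAt M.f M.D π M.D a e = M.replaceAt M.f M.D π M.D a' e
      rw [replaceAt_self]
      exact hπ a a' e hpa
    · rw [SCIM.gpol, replaceAt_ne M M.f M.D π hvD]
      exact M.localDep v a a' e hpa
  have hgf : ∀ π, ∀ v, v ∈ l → M.gpol π v = M.f v := by
    intro π v hv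
    exact replaceAt_ne M M.f M.D π (hND v (by rw [hLdef]; exact List.mem_cons_of_mem _ hv))
  have hnone : predIn L X = none := predIn_eq_none (by rw [hLdef]; simpa using hXl)
  refine ⟨M, rfl, rfl, rfl, fun _ => rfl, ?_, ?_⟩
  · -- every policy has expected utility 0
    intro π hπ
    have hX0 : ∀ ε, M.sol (M.gpol π) ε X = false := by
      intro ε
      have hsol := sol_solves M (M.gpol π) (hgL π hπ) ε
      calc M.sol (M.gpol π) ε X
          = M.gpol π X (M.sol (M.gpol π) ε) (ε X) := hsol X
        _ = M.f X (M.sol (M.gpol π) ε) (ε X) := by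
            rw [SCIM.gpol, replaceAt_ne M M.f M.D π hXD]
        _ = false := by
            show (match predIn L X with
              | some p => M.sol (M.gpol π) ε p | none => false) = false
            rw [hnone]
    have hu0 : ∀ ε, M.sol (M.gpol π) ε u = false := fun ε =>
      (main (M.gpol π) (hgL π hπ) (hgf π) ε u huL).trans (hX0 ε)
    have hutil : ∀ (w : V) (b : Bool), M.utilReal w b
        = if w = u then (if b then (1:ℝ) else 0) else 0 := fun _ _ => rfl
    rw [SCIM.EU, SCIM.EUg]
    apply Finset.sum_eq_zero
    intro ε _
    have htu : M.TotalU (M.sol (M.gpol π) ε) = 0 := by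
      rw [SCIM.TotalU]
      apply Finset.sum_eq_zero
      intro w hw
      rw [hutil]
      by_cases hwu : w = u
      · rw [if_pos hwu]
        have := hu0 ε
        rw [hwu, this]
        simp
      · rw [if_neg hwu]
    rw [htu, mul_zero]
  · -- the soft intervention X := true gives expected utility 1
    refine ⟨fun _ _ => true, fun _ _ _ _ => rfl, ?_⟩
    intro π hπ
    set g' : (v : V) → ((p : V) → M.Dom p) → M.ExoDom v → M.Dom v :=
      M.replaceAt (M.gpol π) X (fun _ _ => true) with hg'
    have hgL' : ∀ v a a' e, (∀ p, M.Edge p v → a p = a' p) → g' v a e = g' v a' e := by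
      intro v a a' e hpa
      by_cases hvX : v = X
      · subst hvX
        rw [hg', replaceAt_self]
      · rw [hg', replaceAt_ne M (M.gpol π) X _ hvX]
        exact hgL π hπ v a a' e hpa
    have hgf' : ∀ v, v ∈ l → g' v = M.f v := by
      intro v hv
      have hvX : v ≠ X := fun hh => hXl (hh ▸ hv)
      rw [hg', replaceAt_ne M (M.gpol π) X _ hvX]
      exact hgf π v hv
    have hX1 : ∀ ε, M.sol g' ε X = true := by
      intro ε
      have hsol := sol_solves M g' hgL' ε
      calc M.sol g' ε X = g' X (M.sol g' ε) (ε X) := hsol X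
        _ = true := by rw [hg', replaceAt_self]
    have hu1 : ∀ ε, M.sol g' ε u = true := fun ε =>
      (main g' hgL' hgf' ε u huL).trans (hX1 ε)
    have hutil : ∀ (w : V) (b : Bool), M.utilReal w b
        = if w = u then (if b then (1:ℝ) else 0) else 0 := fun _ _ => rfl
    have hterm : ∀ ε, M.Pjoint ε * M.TotalU (M.sol g' ε) = 1 := by
      intro ε
      have hpj : M.Pjoint ε = 1 := by
        rw [SCIM.Pjoint]
        exact Finset.prod_const_one
      have htu : M.TotalU (M.sol g' ε) = 1 := by
        rw [SCIM.TotalU]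
        rw [Finset.sum_eq_single_of_mem (s := M.Util)
          (f := fun w => M.utilReal w (M.sol g' ε w)) u hu (fun w hw hwu => by
            show M.utilReal w (M.sol g' ε w) = 0
            rw [hutil, if_neg hwu])]
        rw [hutil, if_pos rfl, hu1 ε]
        simp
      rw [hpj, htu, mul_one]
    have hcard : M.exoElems.card = 1 := by
      letI : ∀ v : V, Fintype (M.ExoDom v) := M.exoFin
      haveI : ∀ v : V, Subsingleton (M.ExoDom v) :=
        fun v => ⟨fun a b => Subsingleton.elim (α := Unit) a b⟩
      apply Finset.card_eq_one.mpr
      refine ⟨fun _ => (), ?_⟩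
      apply Finset.eq_singleton_iff_unique_mem.mpr
      constructor
      · exact Finset.mem_univ _
      · intro x _
        funext v
        exact Subsingleton.elim _ _
    rw [SCIM.EUg]
    calc ∑ ε ∈ M.exoElems, M.Pjoint ε * M.TotalU (M.sol g' ε)
        = ∑ _ε ∈ M.exoElems, (1:ℝ) := Finset.sum_congr rfl (fun ε _ => hterm ε)
      _ = 1 := by rw [Finset.sum_const, hcard]; simp
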